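/- Every FTRL dynamic guarantees constant regret: for the FTRL dynamic with regularizer h and initial state q⁰, for every continuous payoff stream p : [0,∞) → ℝ^n and every T > 0, the regret at time T is at most max_{1≤j≤n} ( h*(q⁰) − q⁰_j + h(e_j) ). -/

import Mathlib

open scoped BigOperators
open MeasureTheory

noncomputable section

/-- The standard probability simplex in ℝⁿ. -/
def simplex (n : ℕ) : Set (Fin n → ℝ) := {x | (∀ j, 0 ≤ x j) ∧ ∑ j, x j = 1}

/-- Euclidean inner product on ℝⁿ. -/
def dot {n : ℕ} (a b : Fin n → ℝ) : ℝ := ∑ j, a j * b j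

/-- The cumulative-payoff trajectory q(t) = q⁰ + ∫₀ᵗ p(τ) dτ. -/
def traj {n : ℕ} (q0 : Fin n → ℝ) (p : ℝ → Fin n → ℝ) (t : ℝ) : Fin n → ℝ :=
  q0 + ∫ τ in (0:ℝ)..t, p τ

/-! ### Auxiliary lemmas -/

lemma dot_sub_left {n : ℕ} (a b c : Fin n → ℝ) : dot (a - b) c = dot a c - dot b c := by
  simp [dot, sub_mul, Finset.sum_sub_distrib]

lemma dot_sub_right {n : ℕ} (a b c : Fin n → ℝ) : dot a (b - c) = dot a b - dot a c := by
  simp [dot, mul_sub, Finset.sum_sub_distrib]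

lemma dot_smul_add {n : ℕ} (q x y : Fin n → ℝ) (a b : ℝ) :
    dot q (a • x + b • y) = a * dot q x + b * dot q y := by
  simp only [dot, Pi.add_apply, Pi.smul_apply, smul_eq_mul, Finset.mul_sum]
  rw [← Finset.sum_add_distrib]
  exact Finset.sum_congr rfl fun j _ => by ring

lemma abs_dot_le {n : ℕ} (a b : Fin n → ℝ) : |dot a b| ≤ (n : ℝ) * (‖a‖ * ‖b‖) := by
  calc |dot a b| ≤ ∑ j, |a j * b j| := Finset.abs_sum_le_sum_abs _ _
    _ ≤ ∑ _j : Fin n, ‖a‖ * ‖b‖ := by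
        refine Finset.sum_le_sum fun j _ => ?_
        rw [abs_mul]
        exact mul_le_mul (by simpa using norm_le_pi_norm a j)
          (by simpa using norm_le_pi_norm b j) (abs_nonneg _) (norm_nonneg _)
    _ = (n : ℝ) * (‖a‖ * ‖b‖) := by
        simp [Finset.sum_const, Finset.card_univ, nsmul_eq_mul]

lemma continuous_dot {n : ℕ} :
    Continuous (fun vw : (Fin n → ℝ) × (Fin n → ℝ) => dot vw.1 vw.2) := by
  unfold dot
  exact continuous_finset_sum _ fun j _ =>
    ((continuous_apply j).comp continuous_fst).mul ((continuous_apply j).comp continuous_snd)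

lemma dot_single {n : ℕ} (v : Fin n → ℝ) (j : Fin n) : dot v (Pi.single j 1) = v j := by
  simp [dot, Pi.single_apply, mul_ite, Finset.sum_ite_eq']

lemma single_mem_simplex {n : ℕ} (j : Fin n) : Pi.single j 1 ∈ simplex n := by
  constructor
  · intro k
    by_cases hk : k = j <;> simp [Pi.single_apply, hk]
  · simp [Pi.single_apply]

lemma simplex_isCompact (n : ℕ) : IsCompact (simplex n) := by
  have hrepr : simplex n = (⋂ j, {x : Fin n → ℝ | 0 ≤ x j}) ∩ {x | ∑ j, x j = 1} := by
    ext x; simp [simplex, Set.mem_iInter]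
  rw [Metric.isCompact_iff_isClosed_bounded]
  constructor
  · rw [hrepr]
    exact IsClosed.inter (isClosed_iInter fun j =>
        isClosed_le continuous_const (continuous_apply j))
      (isClosed_eq (continuous_finset_sum _ fun j _ => continuous_apply j) continuous_const)
  · rw [isBounded_iff_forall_norm_le]
    refine ⟨1, fun x hx => ?_⟩
    rw [pi_norm_le_iff_of_nonneg (by norm_num)]
    intro i
    rw [Real.norm_eq_abs, abs_of_nonneg (hx.1 i)]
    calc x i ≤ ∑ j, x j := Finset.single_le_sum (fun j _ => hx.1 j) (Finset.mem_univ i)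
      _ = 1 := hx.2

lemma maximizer_eq {n : ℕ} {h : (Fin n → ℝ) → ℝ} (hconv : StrictConvexOn ℝ (simplex n) h)
    {f : (Fin n → ℝ) → (Fin n → ℝ)}
    (hf : ∀ q, f q ∈ simplex n ∧
      ∀ x ∈ simplex n, dot q x - h x ≤ dot q (f q) - h (f q))
    (q y : Fin n → ℝ) (hy : y ∈ simplex n)
    (hmax : ∀ x ∈ simplex n, dot q x - h x ≤ dot q y - h y) : y = f q := by
  by_contra hne
  have hfq := (hf q).1
  have h1 := (hf q).2 y hy
  have h2 := hmax (f q) hfq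
  have hz : (1/2 : ℝ) • y + (1/2 : ℝ) • f q ∈ simplex n :=
    hconv.1 hy hfq (by norm_num) (by norm_num) (by norm_num)
  have hs := hconv.2 hy hfq hne (by norm_num : (0:ℝ) < 1/2) (by norm_num : (0:ℝ) < 1/2)
    (by norm_num)
  have h3 := (hf q).2 _ hz
  rw [dot_smul_add] at h3
  simp only [smul_eq_mul] at hs
  linarith

set_option maxHeartbeats 1000000 in
lemma f_continuous {n : ℕ} {h : (Fin n → ℝ) → ℝ} (hconv : StrictConvexOn ℝ (simplex n) h)
    (hcont : ContinuousOn h (simplex n)) {f : (Fin n → ℝ) → (Fin n → ℝ)}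
    (hf : ∀ q, f q ∈ simplex n ∧
      ∀ x ∈ simplex n, dot q x - h x ≤ dot q (f q) - h (f q)) :
    Continuous f := by
  have hcomp := simplex_isCompact n
  rw [continuous_iff_seqContinuous]
  intro u q hu
  apply Filter.tendsto_of_subseq_tendsto
  intro ns hns
  obtain ⟨y, hy, ms, hms, hlim⟩ :=
    hcomp.tendsto_subseq (x := fun k => f (u (ns k))) (fun k => (hf (u (ns k))).1)
  refine ⟨ms, ?_⟩
  have hq : Filter.Tendsto (fun i => u (ns (ms i))) Filter.atTop (nhds q) :=
    hu.comp (hns.comp hms.tendsto_atTop)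
  have hfy : Filter.Tendsto (fun i => f (u (ns (ms i)))) Filter.atTop (nhds y) := hlim
  have hhy : Filter.Tendsto (fun i => h (f (u (ns (ms i))))) Filter.atTop (nhds (h y)) := by
    apply (hcont y hy).tendsto.comp
    rw [tendsto_nhdsWithin_iff]
    exact ⟨hfy, Filter.Eventually.of_forall fun k => (hf _).1⟩
  have hdoty : Filter.Tendsto (fun i => dot (u (ns (ms i))) (f (u (ns (ms i)))))
      Filter.atTop (nhds (dot q y)) :=
    (continuous_dot.tendsto (q, y)).comp (hq.prodMk_nhds hfy)
  have hmax : ∀ x ∈ simplex n, dot q x - h x ≤ dot q y - h y := by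
    intro x hx
    have hdx : Filter.Tendsto (fun i => dot (u (ns (ms i))) x) Filter.atTop (nhds (dot q x)) :=
      (continuous_dot.tendsto (q, x)).comp (hq.prodMk_nhds tendsto_const_nhds)
    exact le_of_tendsto_of_tendsto' (hdx.sub tendsto_const_nhds) (hdoty.sub hhy)
      fun i => (hf (u (ns (ms i)))).2 x hx
  have hyfq := maximizer_eq hconv hf q y hy hmax
  rw [hyfq] at hfy
  exact hfy

/- STATEMENT 3 -/

theorem ftrl_constant_regret
    (n : ℕ) [NeZero n] (h : (Fin n → ℝ) → ℝ)
    (hconv : StrictConvexOn ℝ (simplex n) h)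
    (hcont : ContinuousOn h (simplex n))
    (f : (Fin n → ℝ) → (Fin n → ℝ))
    (hf : ∀ q, f q ∈ simplex n ∧
      ∀ x ∈ simplex n, dot q x - h x ≤ dot q (f q) - h (f q))
    (q0 : Fin n → ℝ) :
    ∀ (p : ℝ → Fin n → ℝ), Continuous p → ∀ T : ℝ, 0 < T →
      (⨆ j, ∫ τ in (0:ℝ)..T, p τ j) -
        (∫ τ in (0:ℝ)..T, dot (p τ) (f (traj q0 p τ)))
      ≤ ⨆ j, ((dot q0 (f q0) - h (f q0)) - q0 j + h (Pi.single j 1)) := by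
  intro p hp T hT
  haveI : Nonempty (Fin n) := Fin.pos_iff_nonempty.mp (Nat.pos_of_ne_zero (NeZero.ne n))
  set q : ℝ → Fin n → ℝ := traj q0 p with hq_def
  -- derivative of q
  have hqd : ∀ t, HasDerivAt q (p t) t := by
    intro t
    exact ((hp.integral_hasStrictDerivAt 0 t).hasDerivAt).const_add q0
  have hqc : Continuous q := by
    rw [continuous_iff_continuousAt]; exact fun t => (hqd t).continuousAt
  have hfc : Continuous f := f_continuous hconv hcont hf
  set x : ℝ → Fin n → ℝ := fun t => f (q t) with hx_def
  have hxc : Continuous x := hfc.comp hqc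
  set H : ℝ → ℝ := fun t => dot (q t) (x t) - h (x t) with hH_def
  set g : ℝ → ℝ := fun t => dot (p t) (x t) with hg_def
  have hgc : Continuous g := continuous_dot.comp (hp.prodMk hxc)
  -- key inequality
  have hkey : ∀ s t : ℝ, H s - H t ≤ dot (q s - q t) (x s) := by
    intro s t
    have hmem := (hf (q s)).1
    have hineq := (hf (q t)).2 (x s) hmem
    rw [dot_sub_left]
    simp only [hH_def]
    linarith
  -- H has derivative g everywhere
  have hHd : ∀ t, HasDerivAt H (g t) t := by
    intro t₀
    rw [hasDerivAt_iff_isLittleO]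
    have hφ : HasDerivAt (fun s => dot (q s) (x t₀)) (dot (p t₀) (x t₀)) t₀ := by
      have := fun j => (hasDerivAt_pi.mp (hqd t₀)) j
      unfold dot
      exact HasDerivAt.fun_sum fun j _ => (this j).mul_const (x t₀ j)
    have hφo := hasDerivAt_iff_isLittleO.mp hφ
    -- the error term
    have hE1 : ∀ s, |H s - H t₀ - dot (q s - q t₀) (x t₀)| ≤
        (n : ℝ) * (‖q s - q t₀‖ * ‖x s - x t₀‖) := by
      intro s
      have hlow : 0 ≤ H s - H t₀ - dot (q s - q t₀) (x t₀) := by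
        have := hkey t₀ s
        rw [dot_sub_left] at this ⊢
        linarith
      have hup : H s - H t₀ - dot (q s - q t₀) (x t₀) ≤ dot (q s - q t₀) (x s - x t₀) := by
        have := hkey s t₀
        rw [dot_sub_right]
        linarith
      rw [abs_of_nonneg hlow]
      calc H s - H t₀ - dot (q s - q t₀) (x t₀) ≤ dot (q s - q t₀) (x s - x t₀) := hup
        _ ≤ |dot (q s - q t₀) (x s - x t₀)| := le_abs_self _
        _ ≤ (n : ℝ) * (‖q s - q t₀‖ * ‖x s - x t₀‖) := abs_dot_le _ _
    have hqO : (fun s => q s - q t₀) =O[nhds t₀] fun s => s - t₀ :=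
      (hqd t₀).isBigO_sub
    have hxo : (fun s => x s - x t₀) =o[nhds t₀] (fun _ => (1 : ℝ)) := by
      rw [Asymptotics.isLittleO_one_iff]
      simpa using (hxc.tendsto t₀).sub_const (x t₀)
    have hmul : (fun s => ‖q s - q t₀‖ * ‖x s - x t₀‖) =o[nhds t₀] fun s => s - t₀ := by
      have := hqO.norm_left.mul_isLittleO hxo.norm_left
      simpa using this
    have hEo : (fun s => H s - H t₀ - dot (q s - q t₀) (x t₀)) =o[nhds t₀]
        fun s => s - t₀ := by
      refine Asymptotics.IsBigO.trans_isLittleO ?_ hmul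
      refine Asymptotics.IsBigO.of_bound (n : ℝ) ?_
      refine Filter.Eventually.of_forall fun s => ?_
      rw [Real.norm_eq_abs, Real.norm_eq_abs]
      rw [abs_of_nonneg (mul_nonneg (norm_nonneg _) (norm_nonneg _))]
      exact hE1 s
    have heq : (fun s => H s - H t₀ - (s - t₀) • g t₀) =
        fun s => (dot (q s) (x t₀) - dot (q t₀) (x t₀) - (s - t₀) • dot (p t₀) (x t₀)) +
          (H s - H t₀ - dot (q s - q t₀) (x t₀)) := by
      funext s
      rw [dot_sub_left]
      simp only [smul_eq_mul, hg_def]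
      ring
    rw [heq]
    exact hφo.add hEo
  -- FTC
  have hFTC : ∫ τ in (0:ℝ)..T, dot (p τ) (f (q τ)) = H T - H 0 := by
    have : ∫ τ in (0:ℝ)..T, g τ = H T - H 0 :=
      intervalIntegral.integral_eq_sub_of_hasDerivAt (fun t _ => hHd t)
        (hgc.intervalIntegrable 0 T)
    exact this
  have hq0 : q 0 = q0 := by
    simp [hq_def, traj, intervalIntegral.integral_same]
  have hH0 : H 0 = dot q0 (f q0) - h (f q0) := by
    simp only [hH_def, hx_def, hq0]
  -- component formula for q T
  have hqTj : ∀ j, q T j = q0 j + ∫ τ in (0:ℝ)..T, p τ j := by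
    intro j
    have hL := (ContinuousLinearMap.proj (R := ℝ) (φ := fun _ : Fin n => ℝ)
      j).intervalIntegral_comp_comm (μ := volume) (hp.intervalIntegrable 0 T)
    simp only [ContinuousLinearMap.proj_apply] at hL
    have : q T j = q0 j + (∫ τ in (0:ℝ)..T, p τ) j := rfl
    rw [this, ← hL]
  rw [hFTC, sub_le_iff_le_add]
  set B : Fin n → ℝ := fun j => (dot q0 (f q0) - h (f q0)) - q0 j + h (Pi.single j 1) with hB_def
  have hBdd : BddAbove (Set.range B) := (Set.finite_range B).bddAbove
  refine ciSup_le fun j => ?_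
  have hHT : q T j - h (Pi.single j 1) ≤ H T := by
    have := (hf (q T)).2 (Pi.single j 1) (single_mem_simplex j)
    rw [dot_single] at this
    exact this
  have hle : ∫ τ in (0:ℝ)..T, p τ j ≤ B j + (H T - H 0) := by
    have hTj := hqTj j
    simp only [hB_def]
    rw [hH0] at *
    linarith
  exact hle.trans (add_le_add_left (le_ciSup hBdd j) _)
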